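/- If t is a positive integer with t ≡ 12 (mod 18), then a₃(t) = (2t² − 32t + 96)/9. -/

import Mathlib

/-- A 3×3 magic square with magic sum `t`: pairwise distinct positive integer entries,
all row sums, column sums, and both main diagonal sums equal to `t`. -/
def IsMagicSquare3 (t : ℕ) (M : Matrix (Fin 3) (Fin 3) ℕ) : Prop :=
  (∀ i j, 0 < M i j) ∧
  (Function.Injective fun p : Fin 3 × Fin 3 => M p.1 p.2) ∧
  (∀ i, ∑ j, M i j = t) ∧
  (∀ j, ∑ i, M i j = t) ∧
  M 0 0 + M 1 1 + M 2 2 = t ∧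
  M 0 2 + M 1 1 + M 2 0 = t

/-- The number of 3×3 magic squares with magic sum `t`. -/
noncomputable def a3 (t : ℕ) : ℕ := Set.ncard {M : Matrix (Fin 3) (Fin 3) ℕ | IsMagicSquare3 t M}

/-! ### Auxiliary development -/

def magicF (c : ℤ) (p : ℤ × ℤ) : Matrix (Fin 3) (Fin 3) ℕ :=
  Matrix.of ![![(c+p.1).toNat, (c-p.1-p.2).toNat, (c+p.2).toNat],
             ![(c-p.1+p.2).toNat, c.toNat, (c+p.1-p.2).toNat],
             ![(c-p.2).toNat, (c+p.1+p.2).toNat, (c-p.1).toNat]]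

@[simp] lemma magicF_00 (c : ℤ) (p : ℤ × ℤ) : magicF c p 0 0 = (c+p.1).toNat := rfl
@[simp] lemma magicF_01 (c : ℤ) (p : ℤ × ℤ) : magicF c p 0 1 = (c-p.1-p.2).toNat := rfl
@[simp] lemma magicF_02 (c : ℤ) (p : ℤ × ℤ) : magicF c p 0 2 = (c+p.2).toNat := rfl
@[simp] lemma magicF_10 (c : ℤ) (p : ℤ × ℤ) : magicF c p 1 0 = (c-p.1+p.2).toNat := rfl
@[simp] lemma magicF_11 (c : ℤ) (p : ℤ × ℤ) : magicF c p 1 1 = c.toNat := rfl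
@[simp] lemma magicF_12 (c : ℤ) (p : ℤ × ℤ) : magicF c p 1 2 = (c+p.1-p.2).toNat := rfl
@[simp] lemma magicF_20 (c : ℤ) (p : ℤ × ℤ) : magicF c p 2 0 = (c-p.2).toNat := rfl
@[simp] lemma magicF_21 (c : ℤ) (p : ℤ × ℤ) : magicF c p 2 1 = (c+p.1+p.2).toNat := rfl
@[simp] lemma magicF_22 (c : ℤ) (p : ℤ × ℤ) : magicF c p 2 2 = (c-p.1).toNat := rfl

lemma inj_of_nodup (M : Matrix (Fin 3) (Fin 3) ℕ)
    (h : ([M 0 0, M 0 1, M 0 2, M 1 0, M 1 1, M 1 2, M 2 0, M 2 1, M 2 2]).Nodup) :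
    Function.Injective fun p : Fin 3 × Fin 3 => M p.1 p.2 := by
  have e : (fun p : Fin 3 × Fin 3 => M p.1 p.2) =
      ([M 0 0, M 0 1, M 0 2, M 1 0, M 1 1, M 1 2, M 2 0, M 2 1, M 2 2].get) ∘
        (finProdFinEquiv (m := 3) (n := 3)) := by
    funext p; fin_cases p <;> rfl
  rw [e]
  exact (List.nodup_iff_injective_get.mp h).comp (Equiv.injective _)

lemma magic_mapsto (k : ℕ) (a b : ℤ)
    (h1 : -(6*(k:ℤ)+3) ≤ a+b) (h2 : a+b ≤ 6*(k:ℤ)+3)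
    (h3 : -(6*(k:ℤ)+3) ≤ a-b) (h4 : a-b ≤ 6*(k:ℤ)+3)
    (ha : a ≠ 0) (hb : b ≠ 0) (hab : a ≠ b) (hab' : a ≠ -b)
    (h2a : b ≠ 2*a) (h2a' : b ≠ -(2*a)) (h2b : a ≠ 2*b) (h2b' : a ≠ -(2*b)) :
    IsMagicSquare3 (18*k+12) (magicF (6*(k:ℤ)+4) (a, b)) := by
  refine ⟨?_, ?_, ?_, ?_, ?_, ?_⟩
  · intro i j
    fin_cases i <;> fin_cases j <;> simp <;> omega
  · apply inj_of_nodup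
    simp only [magicF_00, magicF_01, magicF_02, magicF_10, magicF_11, magicF_12,
      magicF_20, magicF_21, magicF_22, List.nodup_cons, List.mem_cons,
      List.mem_singleton, List.not_mem_nil, or_false, List.nodup_nil, and_true,
      not_or]
    repeat' apply And.intro
    all_goals first | exact not_false | omega
  · intro i
    fin_cases i <;> simp [Fin.sum_univ_three] <;> omega
  · intro j
    fin_cases j <;> simp [Fin.sum_univ_three] <;> omega
  · simp; omega
  · simp; omega

lemma magic_surj (k : ℕ) (M : Matrix (Fin 3) (Fin 3) ℕ) (hM : IsMagicSquare3 (18*k+12) M) :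
    ∃ a b : ℤ,
      (-(6*(k:ℤ)+3) ≤ a+b ∧ a+b ≤ 6*(k:ℤ)+3 ∧ -(6*(k:ℤ)+3) ≤ a-b ∧ a-b ≤ 6*(k:ℤ)+3 ∧
       a ≠ 0 ∧ b ≠ 0 ∧ a ≠ b ∧ a ≠ -b ∧ b ≠ 2*a ∧ b ≠ -(2*a) ∧ a ≠ 2*b ∧ a ≠ -(2*b)) ∧
      magicF (6*(k:ℤ)+4) (a, b) = M := by
  obtain ⟨hpos, hinj, hrow, hcol, hd1, hd2⟩ := hM
  have r0 := hrow 0; have r1 := hrow 1; have r2 := hrow 2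
  have c0 := hcol 0; have c1 := hcol 1; have c2 := hcol 2
  simp only [Fin.sum_univ_three] at r0 r1 r2 c0 c1 c2
  refine ⟨(M 0 0 : ℤ) - (6*(k:ℤ)+4), (M 0 2 : ℤ) - (6*(k:ℤ)+4), ?_, ?_⟩
  · have p00 := hpos 0 0; have p01 := hpos 0 1; have p02 := hpos 0 2
    have p10 := hpos 1 0; have p11 := hpos 1 1; have p12 := hpos 1 2
    have p20 := hpos 2 0; have p21 := hpos 2 1; have p22 := hpos 2 2
    have inj : ∀ i j i' j' : Fin 3, M i j = M i' j' → (i,j) ≠ (i',j') → False := by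
      intro i j i' j' he hne
      exact hne (hinj (a₁ := (i,j)) (a₂ := (i',j')) he)
    refine ⟨by omega, by omega, by omega, by omega, ?_, ?_, ?_, ?_, ?_, ?_, ?_, ?_⟩
    · exact fun hc => inj 0 0 2 2 (by omega) (by decide)
    · exact fun hc => inj 0 2 2 0 (by omega) (by decide)
    · exact fun hc => inj 0 0 0 2 (by omega) (by decide)
    · exact fun hc => inj 0 0 2 0 (by omega) (by decide)
    · exact fun hc => inj 1 0 0 0 (by omega) (by decide)
    · exact fun hc => inj 0 1 0 0 (by omega) (by decide)
    · exact fun hc => inj 1 2 0 2 (by omega) (by decide)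
    · exact fun hc => inj 0 1 0 2 (by omega) (by decide)
  · ext i j
    have pij := hpos i j
    fin_cases i <;> fin_cases j <;> simp <;> omega

noncomputable def dia (k : ℕ) : Finset (ℤ × ℤ) :=
  ((Finset.Icc (-(6*(k:ℤ)+3)) (6*(k:ℤ)+3)) ×ˢ (Finset.Icc (-(6*(k:ℤ)+3)) (6*(k:ℤ)+3))).filter
    fun p => -(6*(k:ℤ)+3) ≤ p.1+p.2 ∧ p.1+p.2 ≤ 6*(k:ℤ)+3 ∧
      -(6*(k:ℤ)+3) ≤ p.1-p.2 ∧ p.1-p.2 ≤ 6*(k:ℤ)+3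

lemma mem_dia (k : ℕ) (p : ℤ × ℤ) : p ∈ dia k ↔
    (-(6*(k:ℤ)+3) ≤ p.1 ∧ p.1 ≤ 6*(k:ℤ)+3 ∧ -(6*(k:ℤ)+3) ≤ p.2 ∧ p.2 ≤ 6*(k:ℤ)+3) ∧
    (-(6*(k:ℤ)+3) ≤ p.1+p.2 ∧ p.1+p.2 ≤ 6*(k:ℤ)+3 ∧
      -(6*(k:ℤ)+3) ≤ p.1-p.2 ∧ p.1-p.2 ≤ 6*(k:ℤ)+3) := by
  simp [dia, Finset.mem_filter, Finset.mem_product, Finset.mem_Icc, and_assoc]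

noncomputable def magicT (k : ℕ) : Finset (ℤ × ℤ) :=
  (dia k).filter fun p => p.1 ≠ 0 ∧ p.2 ≠ 0 ∧ p.1 ≠ p.2 ∧ p.1 ≠ -p.2 ∧
    p.2 ≠ 2*p.1 ∧ p.2 ≠ -(2*p.1) ∧ p.1 ≠ 2*p.2 ∧ p.1 ≠ -(2*p.2)

lemma card_filter_prod (s t : Finset ℤ) (P : ℤ → ℤ → Prop) [∀ a b, Decidable (P a b)] :
    ((s ×ˢ t).filter fun p => P p.1 p.2).card = ∑ a ∈ s, (t.filter (P a)).card := by
  rw [Finset.card_filter, Finset.sum_product]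
  exact Finset.sum_congr rfl fun a _ => (Finset.card_filter _ _).symm

lemma sum_odd (n : ℕ) : ∑ i ∈ Finset.range n, (2*i+1) = n^2 := by
  induction n with
  | zero => simp
  | succ n ih => rw [Finset.sum_range_succ, ih]; ring

lemma card_dia (k : ℕ) : (dia k).card = (6*k+4)^2 + (6*k+3)^2 := by
  set m : ℤ := 6*(k:ℤ)+3 with hm
  rw [dia, card_filter_prod _ _
    (fun a b => -(6*(k:ℤ)+3) ≤ a+b ∧ a+b ≤ 6*(k:ℤ)+3 ∧ -(6*(k:ℤ)+3) ≤ a-b ∧ a-b ≤ 6*(k:ℤ)+3)]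
  have hinner : ∀ a ∈ Finset.Icc (-m) m,
      ((Finset.Icc (-m) m).filter fun b => -m ≤ a+b ∧ a+b ≤ m ∧ -m ≤ a-b ∧ a-b ≤ m).card
        = (2*(m - |a|) + 1).toNat := by
    intro a ha
    simp only [Finset.mem_Icc] at ha
    have : ((Finset.Icc (-m) m).filter fun b => -m ≤ a+b ∧ a+b ≤ m ∧ -m ≤ a-b ∧ a-b ≤ m)
        = Finset.Icc (|a| - m) (m - |a|) := by
      ext b
      simp only [Finset.mem_filter, Finset.mem_Icc]
      rcases abs_cases a with ⟨h, _⟩ | ⟨h, _⟩ <;> rw [h] <;> omega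
    rw [this, Int.card_Icc]
    congr 1; omega
  rw [Finset.sum_congr rfl hinner]
  rw [show Finset.Icc (-m) m = Finset.Ico (-m) 0 ∪ Finset.Icc 0 m by
      ext x; simp only [Finset.mem_Icc, Finset.mem_Ico, Finset.mem_union]; omega,
    Finset.sum_union (by
      simp only [Finset.disjoint_left, Finset.mem_Ico, Finset.mem_Icc]
      intro x hx hx2; omega)]
  have hneg : ∑ a ∈ Finset.Ico (-m) 0, (2*(m - |a|) + 1).toNat
      = ∑ i ∈ Finset.range (6*k+3), (2*i+1) := by
    apply Finset.sum_nbij' (fun a => (m + a).toNat) (fun i => (i : ℤ) - m)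
    · intro a ha; simp only [Finset.mem_Ico] at ha; simp only [Finset.mem_range]; omega
    · intro i hi; simp only [Finset.mem_range] at hi; simp only [Finset.mem_Ico]; omega
    · intro a ha; simp only [Finset.mem_Ico] at ha; omega
    · intro i hi; simp only [Finset.mem_range] at hi; omega
    · intro a ha; simp only [Finset.mem_Ico] at ha
      rcases abs_cases a with ⟨h, _⟩ | ⟨h, _⟩ <;> rw [h] <;> omega
  have hpos : ∑ a ∈ Finset.Icc 0 m, (2*(m - |a|) + 1).toNat
      = ∑ i ∈ Finset.range (6*k+4), (2*i+1) := by
    apply Finset.sum_nbij' (fun a => (m - a).toNat) (fun i => m - (i : ℤ))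
    · intro a ha; simp only [Finset.mem_Icc] at ha; simp only [Finset.mem_range]; omega
    · intro i hi; simp only [Finset.mem_range] at hi; simp only [Finset.mem_Icc]; omega
    · intro a ha; simp only [Finset.mem_Icc] at ha; omega
    · intro i hi; simp only [Finset.mem_range] at hi; omega
    · intro a ha; simp only [Finset.mem_Icc] at ha
      rcases abs_cases a with ⟨h, _⟩ | ⟨h, _⟩ <;> rw [h] <;> omega
  rw [hneg, hpos, sum_odd, sum_odd]; ring

noncomputable def lineL (k : ℕ) (e1 e2 : ℤ) : Finset (ℤ × ℤ) :=
  (dia k).filter fun p => e2*p.1 = e1*p.2 ∧ ¬(p.1 = 0 ∧ p.2 = 0)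

lemma card_lineL (k : ℕ) (e1 e2 : ℤ) (r : ℕ) (he : e1 ≠ 0 ∨ e2 ≠ 0)
    (hgcd : ∀ a b : ℤ, e2*a = e1*b → (a, b) ∈ dia k → ∃ x : ℤ, a = e1*x ∧ b = e2*x)
    (hmem : ∀ x : ℤ, ((e1*x, e2*x) ∈ dia k) ↔ (-(r:ℤ) ≤ x ∧ x ≤ r)) :
    (lineL k e1 e2).card = 2*r := by
  have himg : lineL k e1 e2
      = ((Finset.Icc (-(r:ℤ)) r).erase 0).image fun x => (e1*x, e2*x) := by
    ext ⟨a, b⟩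
    simp only [lineL, Finset.mem_filter, Finset.mem_image, Finset.mem_erase, Finset.mem_Icc,
      Prod.mk.injEq]
    constructor
    · rintro ⟨hd, hl, hno⟩
      obtain ⟨x, rfl, rfl⟩ := hgcd a b hl hd
      have hx0 : x ≠ 0 := by rintro rfl; simp at hno
      exact ⟨x, ⟨hx0, (hmem x).mp hd⟩, rfl, rfl⟩
    · rintro ⟨x, ⟨hx0, hxr⟩, rfl, rfl⟩
      refine ⟨(hmem x).mpr hxr, by ring, ?_⟩
      intro hc
      rcases he with he | he
      · rcases mul_eq_zero.mp hc.1 with h | h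
        · exact he h
        · exact hx0 h
      · rcases mul_eq_zero.mp hc.2 with h | h
        · exact he h
        · exact hx0 h
  rw [himg, Finset.card_image_of_injOn,
    Finset.card_erase_of_mem (by simp only [Finset.mem_Icc]; omega), Int.card_Icc]
  · omega
  · intro x _ y _ hxy
    simp only [Prod.mk.injEq] at hxy
    rcases he with he | he
    · exact mul_left_cancel₀ he hxy.1
    · exact mul_left_cancel₀ he hxy.2

lemma card_bad (k : ℕ) :
    ((dia k).filter fun p => ¬(p.1 ≠ 0 ∧ p.2 ≠ 0 ∧ p.1 ≠ p.2 ∧ p.1 ≠ -p.2 ∧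
      p.2 ≠ 2*p.1 ∧ p.2 ≠ -(2*p.1) ∧ p.1 ≠ 2*p.2 ∧ p.1 ≠ -(2*p.2))).card = 52*k+25 := by
  have c01 : (lineL k 0 1).card = 2*(6*k+3) :=
    card_lineL k 0 1 (6*k+3) (Or.inr one_ne_zero)
      (fun a b h hd => ⟨b, by omega, by omega⟩)
      (fun x => by simp only [mem_dia]; omega)
  have c10 : (lineL k 1 0).card = 2*(6*k+3) :=
    card_lineL k 1 0 (6*k+3) (Or.inl one_ne_zero)
      (fun a b h hd => ⟨a, by omega, by omega⟩)
      (fun x => by simp only [mem_dia]; omega)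
  have c11 : (lineL k 1 1).card = 2*(3*k+1) :=
    card_lineL k 1 1 (3*k+1) (Or.inl one_ne_zero)
      (fun a b h hd => ⟨a, by omega, by omega⟩)
      (fun x => by simp only [mem_dia]; omega)
  have c1m1 : (lineL k 1 (-1)).card = 2*(3*k+1) :=
    card_lineL k 1 (-1) (3*k+1) (Or.inl one_ne_zero)
      (fun a b h hd => ⟨a, by omega, by omega⟩)
      (fun x => by simp only [mem_dia]; omega)
  have c12 : (lineL k 1 2).card = 2*(2*k+1) :=
    card_lineL k 1 2 (2*k+1) (Or.inl one_ne_zero)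
      (fun a b h hd => ⟨a, by omega, by omega⟩)
      (fun x => by simp only [mem_dia]; omega)
  have c1m2 : (lineL k 1 (-2)).card = 2*(2*k+1) :=
    card_lineL k 1 (-2) (2*k+1) (Or.inl one_ne_zero)
      (fun a b h hd => ⟨a, by omega, by omega⟩)
      (fun x => by simp only [mem_dia]; omega)
  have c21 : (lineL k 2 1).card = 2*(2*k+1) :=
    card_lineL k 2 1 (2*k+1) (Or.inl two_ne_zero)
      (fun a b h hd => ⟨b, by omega, by omega⟩)
      (fun x => by simp only [mem_dia]; omega)
  have c2m1 : (lineL k 2 (-1)).card = 2*(2*k+1) :=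
    card_lineL k 2 (-1) (2*k+1) (Or.inl two_ne_zero)
      (fun a b h hd => ⟨-b, by omega, by omega⟩)
      (fun x => by simp only [mem_dia]; omega)
  have hB : ((dia k).filter fun p => ¬(p.1 ≠ 0 ∧ p.2 ≠ 0 ∧ p.1 ≠ p.2 ∧ p.1 ≠ -p.2 ∧
      p.2 ≠ 2*p.1 ∧ p.2 ≠ -(2*p.1) ∧ p.1 ≠ 2*p.2 ∧ p.1 ≠ -(2*p.2)))
      = {((0:ℤ),(0:ℤ))} ∪ (lineL k 0 1 ∪ (lineL k 1 0 ∪ (lineL k 1 1 ∪ (lineL k 1 (-1) ∪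
        (lineL k 1 2 ∪ (lineL k 1 (-2) ∪ (lineL k 2 1 ∪ lineL k 2 (-1)))))))) := by
    ext ⟨a, b⟩
    simp only [Finset.mem_union, Finset.mem_singleton, Finset.mem_filter, lineL, mem_dia,
      Prod.mk.injEq]
    omega
  rw [hB]
  have djtac : ∀ s t : Finset (ℤ × ℤ), (∀ p : ℤ × ℤ, p ∈ s → p ∉ t) → Disjoint s t :=
    fun s t h => Finset.disjoint_left.mpr h
  rw [Finset.card_union_of_disjoint (by
        apply djtac; rintro ⟨a,b⟩ hp hq
        simp only [Finset.mem_union, Finset.mem_singleton, lineL, Finset.mem_filter, mem_dia,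
          Prod.mk.injEq] at hp hq
        omega),
      Finset.card_union_of_disjoint (by
        apply djtac; rintro ⟨a,b⟩ hp hq
        simp only [Finset.mem_union, lineL, Finset.mem_filter, mem_dia, Prod.mk.injEq] at hp hq
        omega),
      Finset.card_union_of_disjoint (by
        apply djtac; rintro ⟨a,b⟩ hp hq
        simp only [Finset.mem_union, lineL, Finset.mem_filter, mem_dia, Prod.mk.injEq] at hp hq
        omega),
      Finset.card_union_of_disjoint (by
        apply djtac; rintro ⟨a,b⟩ hp hq
        simp only [Finset.mem_union, lineL, Finset.mem_filter, mem_dia, Prod.mk.injEq] at hp hq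
        omega),
      Finset.card_union_of_disjoint (by
        apply djtac; rintro ⟨a,b⟩ hp hq
        simp only [Finset.mem_union, lineL, Finset.mem_filter, mem_dia, Prod.mk.injEq] at hp hq
        omega),
      Finset.card_union_of_disjoint (by
        apply djtac; rintro ⟨a,b⟩ hp hq
        simp only [Finset.mem_union, lineL, Finset.mem_filter, mem_dia, Prod.mk.injEq] at hp hq
        omega),
      Finset.card_union_of_disjoint (by
        apply djtac; rintro ⟨a,b⟩ hp hq
        simp only [Finset.mem_union, lineL, Finset.mem_filter, mem_dia, Prod.mk.injEq] at hp hq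
        omega),
      Finset.card_union_of_disjoint (by
        apply djtac; rintro ⟨a,b⟩ hp hq
        simp only [Finset.mem_union, lineL, Finset.mem_filter, mem_dia, Prod.mk.injEq] at hp hq
        omega)]
  rw [c01, c10, c11, c1m1, c12, c1m2, c21, c2m1]
  simp
  omega

lemma card_magicT (k : ℕ) : (magicT k).card = 72*k^2 + 32*k := by
  have h1 := Finset.card_filter_add_card_filter_not
    (s := dia k) (p := fun p : ℤ × ℤ => p.1 ≠ 0 ∧ p.2 ≠ 0 ∧ p.1 ≠ p.2 ∧ p.1 ≠ -p.2 ∧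
      p.2 ≠ 2*p.1 ∧ p.2 ≠ -(2*p.1) ∧ p.1 ≠ 2*p.2 ∧ p.1 ≠ -(2*p.2))
  rw [card_bad k, card_dia k] at h1
  have h2 : (6*k+4)^2 + (6*k+3)^2 = 72*k^2 + 32*k + (52*k+25) := by ring
  rw [h2] at h1
  exact Nat.add_right_cancel h1

theorem a3_formula_mod18_12 (t : ℕ) (ht : 0 < t) (h : t % 18 = 12) :
    (a3 t : ℚ) = (2 * (t : ℚ) ^ 2 - 32 * (t : ℚ) + 96) / 9 := by
  obtain ⟨k, rfl⟩ : ∃ k, t = 18*k+12 := ⟨t/18, by omega⟩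
  have hset : {M : Matrix (Fin 3) (Fin 3) ℕ | IsMagicSquare3 (18*k+12) M}
      = (magicF (6*(k:ℤ)+4)) '' ↑(magicT k) := by
    ext M
    simp only [Set.mem_setOf_eq, Set.mem_image, Finset.mem_coe]
    constructor
    · intro hM
      obtain ⟨a, b, ⟨h1, h2, h3, h4, ha, hb, hab, hab', h2a, h2a', h2b, h2b'⟩, heq⟩ :=
        magic_surj k M hM
      refine ⟨(a, b), ?_, heq⟩
      simp only [magicT, Finset.mem_filter, mem_dia]
      exact ⟨⟨⟨by omega, by omega, by omega, by omega⟩, h1, h2, h3, h4⟩,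
        ha, hb, hab, hab', h2a, h2a', h2b, h2b'⟩
    · rintro ⟨⟨a, b⟩, hp, rfl⟩
      simp only [magicT, Finset.mem_filter, mem_dia] at hp
      obtain ⟨⟨⟨u1, u2, u3, u4⟩, e1, e2, e3, e4⟩, ha, hb, hab, hab', h2a, h2a', h2b, h2b'⟩ := hp
      exact magic_mapsto k a b e1 e2 e3 e4 ha hb hab hab' h2a h2a' h2b h2b'
  have hinj : Set.InjOn (magicF (6*(k:ℤ)+4)) ↑(magicT k) := by
    rintro ⟨a, b⟩ hp ⟨a', b'⟩ hq he
    simp only [Finset.mem_coe, magicT, Finset.mem_filter, mem_dia] at hp hq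
    obtain ⟨⟨⟨u1, u2, u3, u4⟩, -⟩, -⟩ := hp
    obtain ⟨⟨⟨v1, v2, v3, v4⟩, -⟩, -⟩ := hq
    have e1 : magicF (6*(k:ℤ)+4) (a, b) 0 0 = magicF (6*(k:ℤ)+4) (a', b') 0 0 := by rw [he]
    have e2 : magicF (6*(k:ℤ)+4) (a, b) 0 2 = magicF (6*(k:ℤ)+4) (a', b') 0 2 := by rw [he]
    simp only [magicF_00, magicF_02] at e1 e2
    have hA : a = a' := by omega
    have hB : b = b' := by omega
    rw [hA, hB]
  have hcard : a3 (18*k+12) = (magicT k).card := by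
    rw [a3, hset, Set.ncard_image_of_injOn hinj, Set.ncard_coe_finset]
  rw [hcard, card_magicT, eq_div_iff (by norm_num : (9:ℚ) ≠ 0)]
  push_cast
  ring
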